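/- Let G ≤ Sym(Ω) be transitive on a finite set Ω, let X = G^{(2),Ω}, and let Σ be a G-invariant partition of Ω. Then Σ is also X-invariant, and the permutation group X^Σ induced by X on Σ satisfies X^Σ ≤ (G^Σ)^{(2),Σ}. -/

import Mathlib

/-- The 2-closure of a set `S` of permutations of `Ω`. -/
def twoClosure {Ω : Type*} (S : Set (Equiv.Perm Ω)) : Set (Equiv.Perm Ω) :=
  {x | ∀ α β : Ω, ∃ g ∈ S, x α = g α ∧ x β = g β}

private lemma blocks_eq {Ω : Type*} {P : Set (Set Ω)} (hpart : Setoid.IsPartition P)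
    {B C : Set Ω} (hB : B ∈ P) (hC : C ∈ P) {a : Ω} (haB : a ∈ B) (haC : a ∈ C) : B = C := by
  obtain ⟨b, _, hu⟩ := hpart.2 a
  rw [hu B ⟨hB, haB⟩, hu C ⟨hC, haC⟩]

private lemma inv_mem_tc {Ω : Type*} {G : Subgroup (Equiv.Perm Ω)} {x : Equiv.Perm Ω}
    (hx : x ∈ twoClosure (G : Set (Equiv.Perm Ω))) :
    x⁻¹ ∈ twoClosure (G : Set (Equiv.Perm Ω)) := by
  intro α β
  obtain ⟨g, hg, h1, h2⟩ := hx (x⁻¹ α) (x⁻¹ β)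
  refine ⟨g⁻¹, G.inv_mem hg, ?_, ?_⟩
  · have : g (x⁻¹ α) = α := by rw [← h1]; simp
    conv_rhs => rw [← this, ← Equiv.Perm.mul_apply, inv_mul_cancel, Equiv.Perm.one_apply]
  · have : g (x⁻¹ β) = β := by rw [← h2]; simp
    conv_rhs => rw [← this, ← Equiv.Perm.mul_apply, inv_mul_cancel, Equiv.Perm.one_apply]

private lemma image_subset_block {Ω : Type*} {G : Subgroup (Equiv.Perm Ω)}
    (P : Set (Set Ω)) (hpart : Setoid.IsPartition P)
    (hinv : ∀ g ∈ G, ∀ B ∈ P, ⇑(g : Equiv.Perm Ω) '' B ∈ P)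
    {x : Equiv.Perm Ω} (hx : x ∈ twoClosure (G : Set (Equiv.Perm Ω)))
    {B : Set Ω} (hB : B ∈ P) {α : Ω} (hα : α ∈ B) :
    ∃ C ∈ P, x α ∈ C ∧ x '' B ⊆ C := by
  obtain ⟨C, ⟨hC, hxC⟩, _⟩ := hpart.2 (x α)
  refine ⟨C, hC, hxC, ?_⟩
  rintro _ ⟨β, hβ, rfl⟩
  obtain ⟨g, hg, h1, h2⟩ := hx α β
  have hgB : g '' B ∈ P := hinv g hg B hB
  have hCeq : g '' B = C := blocks_eq hpart hgB hC ⟨α, hα, h1.symm⟩ hxC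
  rw [h2, ← hCeq]
  exact ⟨β, hβ, rfl⟩

private lemma image_mem {Ω : Type*} {G : Subgroup (Equiv.Perm Ω)}
    (P : Set (Set Ω)) (hpart : Setoid.IsPartition P)
    (hinv : ∀ g ∈ G, ∀ B ∈ P, ⇑(g : Equiv.Perm Ω) '' B ∈ P)
    {x : Equiv.Perm Ω} (hx : x ∈ twoClosure (G : Set (Equiv.Perm Ω)))
    {B : Set Ω} (hB : B ∈ P) : x '' B ∈ P := by
  obtain ⟨α, hα⟩ : B.Nonempty := by
    rcases Set.eq_empty_or_nonempty B with h | h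
    · exact absurd (h ▸ hB) hpart.1
    · exact h
  obtain ⟨C, hC, hxC, hsub⟩ := image_subset_block P hpart hinv hx hB hα
  have hCeq : x '' B = C := by
    refine Set.Subset.antisymm hsub ?_
    intro c hc
    obtain ⟨C', hC', hxC', hsub'⟩ :=
      image_subset_block P hpart hinv (inv_mem_tc hx) hC hxC
    have hα' : x⁻¹ (x α) = α := by simp
    have : C' = B := blocks_eq hpart hC' hB (hα' ▸ hxC') hα
    have hmem : x⁻¹ c ∈ B := this ▸ hsub' ⟨c, hc, rfl⟩
    exact ⟨x⁻¹ c, hmem, by simp⟩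
  exact hCeq ▸ hC

theorem stmt12 {Ω : Type*} [Finite Ω] (G : Subgroup (Equiv.Perm Ω))
    (htrans : ∀ α β : Ω, ∃ g ∈ G, (g : Equiv.Perm Ω) α = β)
    (P : Set (Set Ω)) (hpart : Setoid.IsPartition P)
    (hinv : ∀ g ∈ G, ∀ B ∈ P, ⇑(g : Equiv.Perm Ω) '' B ∈ P) :
    (∀ x ∈ twoClosure (G : Set (Equiv.Perm Ω)), ∀ B ∈ P, ⇑x '' B ∈ P) ∧
    (∀ x ∈ twoClosure (G : Set (Equiv.Perm Ω)), ∀ B ∈ P, ∀ C ∈ P,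
      ∃ g ∈ G, ⇑(g : Equiv.Perm Ω) '' B = ⇑x '' B ∧ ⇑(g : Equiv.Perm Ω) '' C = ⇑x '' C) := by
  constructor
  · intro x hx B hB
    exact image_mem P hpart hinv hx hB
  · intro x hx B hB C hC
    obtain ⟨α, hα⟩ : B.Nonempty := by
      rcases Set.eq_empty_or_nonempty B with h | h
      · exact absurd (h ▸ hB) hpart.1
      · exact h
    obtain ⟨β, hβ⟩ : C.Nonempty := by
      rcases Set.eq_empty_or_nonempty C with h | h
      · exact absurd (h ▸ hC) hpart.1
      · exact h
    obtain ⟨g, hg, h1, h2⟩ := hx α β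
    refine ⟨g, hg, ?_, ?_⟩
    · exact blocks_eq hpart (hinv g hg B hB) (image_mem P hpart hinv hx hB)
        ⟨α, hα, rfl⟩ (h1 ▸ ⟨α, hα, rfl⟩)
    · exact blocks_eq hpart (hinv g hg C hC) (image_mem P hpart hinv hx hC)
        ⟨β, hβ, rfl⟩ (h2 ▸ ⟨β, hβ, rfl⟩)
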